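/- Assume the objective f(u,y) = f₁(u) + f₂(y) with f₁, f₂ convex continuous and Θ₂ = {θ : f₂*(θ) < ∞} bounded. Let c(ξ,h) = f₁(Û_f g) + f₂(ξ_{p T_ini+1}h,…,ξ_{p(T_ini+T_f)}h) + λ_ini‖(ξ₁h,…,ξ_{p T_ini}h)‖₁ with h = (g, −1). Then for every h, sup_{Q ∈ B_ε(δ_{ξ̂})} E_Q[c(ξ,h)] ≤ c(ξ̂,h) + ε·max{ sup_{θ∈Θ₂}‖θ‖_∞ · ‖(g,0)‖_*, λ_ini·‖h‖_* }, where B_ε(δ_{ξ̂}) is the 1-Wasserstein ball of radius ε (in the norm ‖ξ‖_W = Σⱼ‖ξⱼ‖) around the Dirac at the measured data ξ̂, with each block ξⱼ supported on Ξⱼ ⊆ ℝ^{T−T_ini−T_f+2}. -/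

import Mathlib

open MeasureTheory
open scoped ENNReal BigOperators

/-- The convex conjugate `f*(θ) = sup_s ⟨θ,s⟩ - f(s)`. -/
noncomputable def fenchelConj {n : ℕ} (f : (Fin n → ℝ) → ℝ) (θ : Fin n → ℝ) : EReal :=
  ⨆ s : Fin n → ℝ, (((∑ j, θ j * s j) - f s : ℝ) : EReal)

/-- The dual norm `‖θ‖_* = sup_{‖y‖ ≤ 1} ⟨θ, y⟩` of a norm `N`. -/
noncomputable def dualNorm {n : ℕ} (N : (Fin n → ℝ) → ℝ) (θ : Fin n → ℝ) : ℝ :=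
  sSup {r : ℝ | ∃ y : Fin n → ℝ, N y ≤ 1 ∧ r = ∑ i, θ i * y i}

/-- The 1-Wasserstein distance for a given transportation cost, as the infimum of
transport costs over all couplings. -/
noncomputable def wassersteinDist {α : Type*} [MeasurableSpace α]
    (cost : α → α → ℝ) (Q R : Measure α) : ℝ≥0∞ :=
  ⨅ P : {P : Measure (α × α) // P.map Prod.fst = Q ∧ P.map Prod.snd = R},
    ∫⁻ p, ENNReal.ofReal (cost p.1 p.2) ∂P.1

section NormAux
variable {n : ℕ} {N : (Fin n → ℝ) → ℝ}

lemma N_zero (hNeq : ∀ x, N x = 0 ↔ x = 0) : N (0 : Fin n → ℝ) = 0 := (hNeq 0).mpr rfl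

lemma N_sum_le (hNeq : ∀ x, N x = 0 ↔ x = 0) (hNadd : ∀ x y, N (x + y) ≤ N x + N y)
    {ι : Type*} (s : Finset ι) (f : ι → Fin n → ℝ) :
    N (∑ i ∈ s, f i) ≤ ∑ i ∈ s, N (f i) := by
  classical
  induction s using Finset.induction_on with
  | empty => simp [N_zero hNeq]
  | @insert a s ha ih =>
    rw [Finset.sum_insert ha, Finset.sum_insert ha]
    exact le_trans (hNadd _ _) (by linarith)

lemma N_le_mul_norm (hNeq : ∀ x, N x = 0 ↔ x = 0)
    (hNsmul : ∀ (a : ℝ) x, N (a • x) = |a| * N x)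
    (hNadd : ∀ x y, N (x + y) ≤ N x + N y) (hN0 : ∀ x, 0 ≤ N x) (x : Fin n → ℝ) :
    N x ≤ (∑ i, N (Pi.single i 1)) * ‖x‖ := by
  classical
  have hx : x = ∑ i, (x i) • (Pi.single i (1 : ℝ) : Fin n → ℝ) := by
    conv_lhs => rw [← Finset.univ_sum_single x]
    refine Finset.sum_congr rfl fun i _ => ?_
    ext j
    by_cases h : j = i
    · subst h; simp
    · simp [Pi.single_apply, h, Ne.symm]
  calc N x = N (∑ i, (x i) • (Pi.single i (1:ℝ) : Fin n → ℝ)) := by rw [← hx]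
    _ ≤ ∑ i, N ((x i) • (Pi.single i (1:ℝ) : Fin n → ℝ)) := N_sum_le hNeq hNadd _ _
    _ = ∑ i, |x i| * N (Pi.single i 1) := by simp [hNsmul]
    _ ≤ ∑ i, ‖x‖ * N (Pi.single i 1) := by
        refine Finset.sum_le_sum fun i _ => ?_
        have : |x i| ≤ ‖x‖ := by
          simpa [Real.norm_eq_abs] using norm_le_pi_norm x i
        exact mul_le_mul_of_nonneg_right this (hN0 _)
    _ = (∑ i, N (Pi.single i 1)) * ‖x‖ := by
        rw [Finset.sum_mul]; exact Finset.sum_congr rfl fun i _ => mul_comm _ _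

lemma N_continuous (hNeq : ∀ x, N x = 0 ↔ x = 0)
    (hNsmul : ∀ (a : ℝ) x, N (a • x) = |a| * N x)
    (hNadd : ∀ x y, N (x + y) ≤ N x + N y) (hN0 : ∀ x, 0 ≤ N x) :
    Continuous N := by
  set C : ℝ := ∑ i, N (Pi.single i 1) with hC
  have key : ∀ x y : Fin n → ℝ, N x - N y ≤ C * ‖x - y‖ := by
    intro x y
    have h1 : N x ≤ N y + N (x - y) := by
      have := hNadd y (x - y); simpa using this
    have h2 := N_le_mul_norm hNeq hNsmul hNadd hN0 (x - y)
    linarith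
  have : LipschitzWith (Real.toNNReal C) N := by
    apply LipschitzWith.of_dist_le_mul
    intro x y
    have hC0 : 0 ≤ C := Finset.sum_nonneg fun i _ => hN0 _
    rw [Real.dist_eq, Real.coe_toNNReal C hC0, dist_eq_norm]
    rw [abs_sub_le_iff]
    constructor
    · exact key x y
    · have := key y x
      rwa [← neg_sub x y, norm_neg] at this
  exact this.continuous

lemma exists_pos_mul_le (hn : 0 < n) (hNeq : ∀ x, N x = 0 ↔ x = 0)
    (hNsmul : ∀ (a : ℝ) x, N (a • x) = |a| * N x)
    (hNadd : ∀ x y, N (x + y) ≤ N x + N y) (hN0 : ∀ x, 0 ≤ N x) :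
    ∃ m : ℝ, 0 < m ∧ ∀ x, m * ‖x‖ ≤ N x := by
  haveI : Nonempty (Fin n) := ⟨⟨0, hn⟩⟩
  have hsph : (Metric.sphere (0 : Fin n → ℝ) 1).Nonempty :=
    NormedSpace.sphere_nonempty.mpr zero_le_one
  obtain ⟨x₀, hx₀mem, hx₀min⟩ := (isCompact_sphere (0 : Fin n → ℝ) 1).exists_isMinOn hsph
    ((N_continuous hNeq hNsmul hNadd hN0).continuousOn)
  have hx₀norm : ‖x₀‖ = 1 := by simpa using hx₀mem
  have hx₀ne : x₀ ≠ 0 := by intro h; rw [h] at hx₀norm; simp at hx₀norm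
  refine ⟨N x₀, ?_, ?_⟩
  · rcases (hN0 x₀).lt_or_eq with h | h
    · exact h
    · exact absurd ((hNeq x₀).mp h.symm) hx₀ne
  · intro x
    by_cases hx : x = 0
    · simp [hx, N_zero hNeq]
    · have hxn : (0:ℝ) < ‖x‖ := norm_pos_iff.mpr hx
      set u : Fin n → ℝ := ‖x‖⁻¹ • x with hu
      have humem : u ∈ Metric.sphere (0 : Fin n → ℝ) 1 := by
        simp [hu, norm_smul, abs_of_pos (inv_pos.mpr hxn), inv_mul_cancel₀ hxn.ne']
      have h1 : N x₀ ≤ N u := hx₀min humem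
      have h2 : N x = ‖x‖ * N u := by
        have hxe : x = ‖x‖ • u := by
          rw [hu, smul_smul, mul_inv_cancel₀ hxn.ne', one_smul]
        calc N x = N (‖x‖ • u) := by rw [← hxe]
          _ = |‖x‖| * N u := hNsmul _ _
          _ = ‖x‖ * N u := by rw [abs_of_pos hxn]
      rw [h2, mul_comm (N x₀)]
      exact mul_le_mul_of_nonneg_left h1 hxn.le

lemma bddAbove_dualSet (hlow : ∃ m : ℝ, 0 < m ∧ ∀ x, m * ‖x‖ ≤ N x) (θ : Fin n → ℝ) :
    BddAbove {r : ℝ | ∃ y : Fin n → ℝ, N y ≤ 1 ∧ r = ∑ i, θ i * y i} := by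
  obtain ⟨m, hm, hmle⟩ := hlow
  refine ⟨(∑ i, |θ i|) * m⁻¹, ?_⟩
  rintro r ⟨y, hy, rfl⟩
  have hyn : ‖y‖ ≤ m⁻¹ := by
    rw [← one_div, le_div_iff₀ hm, mul_comm]
    exact (hmle y).trans hy
  calc ∑ i, θ i * y i ≤ ∑ i, |θ i| * m⁻¹ := by
        refine Finset.sum_le_sum fun i _ => ?_
        calc θ i * y i ≤ |θ i * y i| := le_abs_self _
          _ = |θ i| * |y i| := abs_mul _ _
          _ ≤ |θ i| * m⁻¹ := by
              refine mul_le_mul_of_nonneg_left ?_ (abs_nonneg _)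
              exact le_trans (by simpa [Real.norm_eq_abs] using norm_le_pi_norm y i) hyn
    _ = (∑ i, |θ i|) * m⁻¹ := by rw [Finset.sum_mul]

lemma dualNorm_nonneg (hNeq : ∀ x, N x = 0 ↔ x = 0)
    (hlow : ∃ m : ℝ, 0 < m ∧ ∀ x, m * ‖x‖ ≤ N x) (θ : Fin n → ℝ) :
    0 ≤ dualNorm N θ := by
  have h0 : (0:ℝ) ∈ {r : ℝ | ∃ y : Fin n → ℝ, N y ≤ 1 ∧ r = ∑ i, θ i * y i} :=
    ⟨0, by simp [(hNeq 0).mpr rfl], by simp⟩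
  exact le_csSup (bddAbove_dualSet hlow θ) h0

lemma pairing_le_N_mul_dual (hNeq : ∀ x, N x = 0 ↔ x = 0)
    (hNsmul : ∀ (a : ℝ) x, N (a • x) = |a| * N x) (hN0 : ∀ x, 0 ≤ N x)
    (hlow : ∃ m : ℝ, 0 < m ∧ ∀ x, m * ‖x‖ ≤ N x) (θ x : Fin n → ℝ) :
    ∑ i, θ i * x i ≤ N x * dualNorm N θ := by
  rcases (hN0 x).lt_or_eq with hx | hx
  · set y : Fin n → ℝ := (N x)⁻¹ • x with hy
    have hNy : N y ≤ 1 := by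
      rw [hy, hNsmul, abs_of_pos (inv_pos.mpr hx), inv_mul_cancel₀ hx.ne']
    have hmem : ∑ i, θ i * y i ∈ {r : ℝ | ∃ y : Fin n → ℝ, N y ≤ 1 ∧ r = ∑ i, θ i * y i} :=
      ⟨y, hNy, rfl⟩
    have hle : ∑ i, θ i * y i ≤ dualNorm N θ := le_csSup (bddAbove_dualSet hlow θ) hmem
    have hsum : ∑ i, θ i * y i = (N x)⁻¹ * ∑ i, θ i * x i := by
      rw [Finset.mul_sum]
      refine Finset.sum_congr rfl fun i _ => ?_
      simp [hy, Pi.smul_apply, smul_eq_mul]; ring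
    rw [hsum] at hle
    calc ∑ i, θ i * x i = N x * ((N x)⁻¹ * ∑ i, θ i * x i) := by
          rw [← mul_assoc, mul_inv_cancel₀ hx.ne', one_mul]
      _ ≤ N x * dualNorm N θ := mul_le_mul_of_nonneg_left hle hx.le
  · have hx0 : x = 0 := (hNeq x).mp hx.symm
    have hN00 : N (0 : Fin n → ℝ) = 0 := (hNeq 0).mpr rfl
    simp [hx0, hN00]

lemma abs_pairing_le_N_mul_dual (hNeq : ∀ x, N x = 0 ↔ x = 0)
    (hNsmul : ∀ (a : ℝ) x, N (a • x) = |a| * N x) (hN0 : ∀ x, 0 ≤ N x)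
    (hlow : ∃ m : ℝ, 0 < m ∧ ∀ x, m * ‖x‖ ≤ N x) (x θ : Fin n → ℝ) :
    |∑ i, x i * θ i| ≤ N x * dualNorm N θ := by
  rw [abs_le]
  constructor
  · have h := pairing_le_N_mul_dual hNeq hNsmul hN0 hlow θ (-x)
    have hNneg : N (-x) = N x := by simpa using hNsmul (-1) x
    rw [hNneg] at h
    have : ∑ i, θ i * (-x) i = -∑ i, x i * θ i := by
      simp [Finset.sum_neg_distrib]; exact Finset.sum_congr rfl fun i _ => by ring
    rw [this] at h
    linarith
  · have h := pairing_le_N_mul_dual hNeq hNsmul hN0 hlow θ x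
    calc ∑ i, x i * θ i = ∑ i, θ i * x i := Finset.sum_congr rfl fun i _ => mul_comm _ _
      _ ≤ N x * dualNorm N θ := h

end NormAux

lemma exists_subgradient {n : ℕ} (f : (Fin n → ℝ) → ℝ)
    (hconv : ConvexOn ℝ Set.univ f) (hcont : Continuous f) (x : Fin n → ℝ) :
    ∃ θ : Fin n → ℝ, fenchelConj f θ < ⊤ ∧
      ∀ y, (∑ i, θ i * y i) - f y ≤ (∑ i, θ i * x i) - f x := by
  classical
  set s : Set ((Fin n → ℝ) × ℝ) := {p | f p.1 < p.2} with hs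
  have hsconv : Convex ℝ s := by
    rintro ⟨p1, p2⟩ hp ⟨q1, q2⟩ hq a b ha hb hab
    simp only [hs, Set.mem_setOf_eq] at hp hq ⊢
    have h1 : f (a • p1 + b • q1) ≤ a * f p1 + b * f q1 := by
      have := hconv.2 (Set.mem_univ p1) (Set.mem_univ q1) ha hb hab
      simpa [smul_eq_mul] using this
    rcases ha.lt_or_eq with ha' | ha'
    · exact lt_of_le_of_lt h1 (add_lt_add_of_lt_of_le (mul_lt_mul_of_pos_left hp ha')
        (mul_le_mul_of_nonneg_left hq.le hb))
    · have hb' : (0:ℝ) < b := by linarith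
      exact lt_of_le_of_lt h1 (add_lt_add_of_le_of_lt (mul_le_mul_of_nonneg_left hp.le ha)
        (mul_lt_mul_of_pos_left hq hb'))
  have hsopen : IsOpen s := by
    have : s = (fun p : (Fin n → ℝ) × ℝ => p.2 - f p.1) ⁻¹' Set.Ioi 0 := by
      ext p; simp [hs, sub_pos]
    rw [this]
    exact (isOpen_Ioi).preimage (continuous_snd.sub (hcont.comp continuous_fst))
  have hxnot : (x, f x) ∉ s := by simp [hs]
  obtain ⟨ℓ, hℓ⟩ := geometric_hahn_banach_open_point hsconv hsopen hxnot
  set β : ℝ := ℓ (0, 1) with hβdef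
  have hdec : ∀ (y : Fin n → ℝ) (t : ℝ), ℓ (y, t) = ℓ (y, 0) + t * β := by
    intro y t
    have : (y, t) = (y, (0:ℝ)) + t • ((0 : Fin n → ℝ), (1:ℝ)) := by
      simp [Prod.ext_iff]
    rw [this, map_add, ℓ.map_smul, smul_eq_mul, hβdef]
  have hβ : β < 0 := by
    have h1 : ℓ (x, f x + 1) < ℓ (x, f x) := hℓ (x, f x + 1) (by simp [hs])
    rw [hdec x (f x + 1), hdec x (f x)] at h1
    linarith
  have key : ∀ y, ℓ (y, 0) + f y * β ≤ ℓ (x, 0) + f x * β := by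
    intro y
    by_contra hcon
    push_neg at hcon
    set D : ℝ := ℓ (y, 0) + f y * β - (ℓ (x, 0) + f x * β) with hD
    have hD0 : 0 < D := by rw [hD]; linarith
    set t : ℝ := f y + D / (-β) with ht
    have htmem : (y, t) ∈ s := by
      simp only [hs, Set.mem_setOf_eq, ht]
      have : 0 < D / (-β) := div_pos hD0 (by linarith)
      linarith
    have h2 := hℓ (y, t) htmem
    rw [hdec y t, hdec x (f x)] at h2
    have hβne : -β ≠ 0 := by linarith
    have ht2 : t * β = f y * β - D := by
      rw [ht, add_mul, div_neg, neg_mul, div_mul_cancel₀ D hβ.ne]; ring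
    rw [ht2] at h2
    rw [hD] at h2
    linarith
  set L : ((Fin n → ℝ)) →ₗ[ℝ] ℝ := ℓ.toLinearMap.comp (LinearMap.inl ℝ (Fin n → ℝ) ℝ) with hL
  have hLval : ∀ y, L y = ℓ (y, 0) := fun y => rfl
  set θ : Fin n → ℝ := fun i => (-β)⁻¹ * L (fun j => if i = j then 1 else 0) with hθ
  have hβpos : 0 < -β := by linarith
  have hpair : ∀ y, ∑ i, θ i * y i = (-β)⁻¹ * L y := by
    intro y
    rw [LinearMap.pi_apply_eq_sum_univ L y, Finset.mul_sum]
    refine Finset.sum_congr rfl fun i _ => ?_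
    simp [hθ, smul_eq_mul]; ring
  have main : ∀ y, (∑ i, θ i * y i) - f y ≤ (∑ i, θ i * x i) - f x := by
    intro y
    rw [hpair, hpair, hLval, hLval]
    have hk := key y
    have h3 := mul_le_mul_of_nonneg_left hk (inv_nonneg.mpr hβpos.le)
    have hβne : β ≠ 0 := hβ.ne
    have hcan : (-β)⁻¹ * β = -1 := by
      rw [inv_neg]; field_simp
    have e : ∀ z : Fin n → ℝ, (-β)⁻¹ * (ℓ (z, 0) + f z * β) = (-β)⁻¹ * ℓ (z, 0) - f z := by
      intro z
      have h5 : (-β)⁻¹ * (f z * β) = -f z := by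
        calc (-β)⁻¹ * (f z * β) = f z * ((-β)⁻¹ * β) := by ring
          _ = -f z := by rw [hcan]; ring
      rw [mul_add, h5]; ring
    rw [e y, e x] at h3
    exact h3
  refine ⟨θ, ?_, main⟩
  have : fenchelConj f θ ≤ (((∑ i, θ i * x i) - f x : ℝ) : EReal) := by
    refine iSup_le fun y => ?_
    exact_mod_cast main y
  exact lt_of_le_of_lt this (EReal.coe_lt_top _)

lemma lintegral_le_wassersteinDist_dirac {α : Type*} [MeasurableSpace α]
    [MeasurableSingletonClass α] (cost : α → α → ℝ) (Q : Measure α) (xh : α)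
    (hmeas : Measurable fun ξ => ENNReal.ofReal (cost ξ xh)) :
    ∫⁻ ξ, ENNReal.ofReal (cost ξ xh) ∂Q ≤ wassersteinDist cost Q (Measure.dirac xh) := by
  refine le_iInf fun P => ?_
  obtain ⟨P, hfst, hsnd⟩ := P
  have hae : ∀ᵐ p ∂P, p.2 = xh := by
    rw [ae_iff]
    have h1 : P.map Prod.snd {xh}ᶜ = 0 := by
      rw [hsnd, Measure.dirac_apply' _ (measurableSet_singleton xh).compl]
      simp
    rw [Measure.map_apply measurable_snd (measurableSet_singleton xh).compl] at h1
    convert h1 using 2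
    ext; simp
  show ∫⁻ ξ, ENNReal.ofReal (cost ξ xh) ∂Q ≤ ∫⁻ p, ENNReal.ofReal (cost p.1 p.2) ∂P
  calc ∫⁻ ξ, ENNReal.ofReal (cost ξ xh) ∂Q
      = ∫⁻ ξ, ENNReal.ofReal (cost ξ xh) ∂(P.map Prod.fst) := by rw [hfst]
    _ = ∫⁻ p, ENNReal.ofReal (cost p.1 xh) ∂P := lintegral_map hmeas measurable_fst
    _ = ∫⁻ p, ENNReal.ofReal (cost p.1 p.2) ∂P :=
        lintegral_congr_ae (hae.mono fun p hp => by dsimp only; rw [hp])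
    _ ≤ ∫⁻ p, ENNReal.ofReal (cost p.1 p.2) ∂P := le_rfl

lemma snoc_sum_eq {dg : ℕ} (g : Fin dg → ℝ) (a b : ℝ) (v : Fin (dg+1) → ℝ)
    (hv : v (Fin.last dg) = 0) :
    ∑ i, v i * (Fin.snoc g a : Fin (dg+1) → ℝ) i
      = ∑ i, v i * (Fin.snoc g b : Fin (dg+1) → ℝ) i := by
  rw [Fin.sum_univ_castSucc, Fin.sum_univ_castSucc]
  simp [Fin.snoc_castSucc, Fin.snoc_last, hv]

/-- Theorem 3 of the paper (Tractable Reformulation, inequality direction). -/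
theorem tractable_reformulation_upper_bound
    (p Tini Tf T mTf dg : ℕ) (hdg : dg + 1 = T - Tini - Tf + 2)
    (N : (Fin (dg + 1) → ℝ) → ℝ)
    (hN0 : ∀ x, 0 ≤ N x) (hNeq : ∀ x, N x = 0 ↔ x = 0)
    (hNsmul : ∀ (a : ℝ) (x : Fin (dg + 1) → ℝ), N (a • x) = |a| * N x)
    (hNadd : ∀ x y, N (x + y) ≤ N x + N y)
    (f₁ : (Fin mTf → ℝ) → ℝ) (hf₁conv : ConvexOn ℝ Set.univ f₁)
    (hf₁cont : Continuous f₁)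
    (f₂ : (Fin (p * Tf) → ℝ) → ℝ) (hf₂conv : ConvexOn ℝ Set.univ f₂)
    (hf₂cont : Continuous f₂)
    (hΘ₂bdd : Bornology.IsBounded {θ : Fin (p * Tf) → ℝ | fenchelConj f₂ θ < ⊤})
    (lamini : ℝ) (hlamini : 0 ≤ lamini)
    (Uf : Matrix (Fin mTf) (Fin dg) ℝ) (g : Fin dg → ℝ)
    (Ξ : (Fin (p * Tini) ⊕ Fin (p * Tf)) → Set (Fin (dg + 1) → ℝ))
    (hΞfut : ∀ (k : Fin (p * Tf)), ∀ ξ ∈ Ξ (Sum.inr k), ξ (Fin.last dg) = 0)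
    (ξhat : (Fin (p * Tini) ⊕ Fin (p * Tf)) → Fin (dg + 1) → ℝ)
    (hξhat : ∀ j, ξhat j ∈ Ξ j)
    (ε : ℝ) (hε : 0 ≤ ε)
    (Q : Measure ((Fin (p * Tini) ⊕ Fin (p * Tf)) → Fin (dg + 1) → ℝ))
    [IsProbabilityMeasure Q]
    (hsupp : ∀ᵐ ξ ∂Q, ∀ j, ξ j ∈ Ξ j)
    (hball : wassersteinDist (fun ξ η => ∑ j, N (ξ j - η j)) Q (Measure.dirac ξhat)
      ≤ ENNReal.ofReal ε)
    (hint : Integrable (fun ξ : (Fin (p * Tini) ⊕ Fin (p * Tf)) → Fin (dg + 1) → ℝ =>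
      f₁ (Uf.mulVec g)
        + f₂ (fun k => ∑ i, ξ (Sum.inr k) i * (Fin.snoc g (-1) : Fin (dg + 1) → ℝ) i)
        + lamini * ∑ j : Fin (p * Tini), |∑ i, ξ (Sum.inl j) i * (Fin.snoc g (-1) : Fin (dg + 1) → ℝ) i|) Q) :
    (∫ ξ, (f₁ (Uf.mulVec g)
        + f₂ (fun k => ∑ i, ξ (Sum.inr k) i * (Fin.snoc g (-1) : Fin (dg + 1) → ℝ) i)
        + lamini * ∑ j : Fin (p * Tini), |∑ i, ξ (Sum.inl j) i * (Fin.snoc g (-1) : Fin (dg + 1) → ℝ) i|) ∂Q)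
      ≤ (f₁ (Uf.mulVec g)
          + f₂ (fun k => ∑ i, ξhat (Sum.inr k) i * (Fin.snoc g (-1) : Fin (dg + 1) → ℝ) i)
          + lamini * ∑ j : Fin (p * Tini), |∑ i, ξhat (Sum.inl j) i * (Fin.snoc g (-1) : Fin (dg + 1) → ℝ) i|)
        + ε * max
            (sSup ((fun θ : Fin (p * Tf) → ℝ => ‖θ‖) ''
                {θ : Fin (p * Tf) → ℝ | fenchelConj f₂ θ < ⊤})
              * dualNorm N (Fin.snoc g 0 : Fin (dg + 1) → ℝ))
            (lamini * dualNorm N (Fin.snoc g (-1) : Fin (dg + 1) → ℝ)) := by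
  classical
  set hv : Fin (dg + 1) → ℝ := (Fin.snoc g (-1) : Fin (dg + 1) → ℝ) with hhv
  set hw : Fin (dg + 1) → ℝ := (Fin.snoc g 0 : Fin (dg + 1) → ℝ) with hhw
  have hlow := exists_pos_mul_le (Nat.succ_pos dg) hNeq hNsmul hNadd hN0
  have hNcont := N_continuous hNeq hNsmul hNadd hN0
  set D₁ := dualNorm N hw with hD₁
  set D₂ := dualNorm N hv with hD₂
  have hD₁0 : 0 ≤ D₁ := dualNorm_nonneg hNeq hlow hw
  have hD₂0 : 0 ≤ D₂ := dualNorm_nonneg hNeq hlow hv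
  set S := sSup ((fun θ : Fin (p * Tf) → ℝ => ‖θ‖) ''
      {θ : Fin (p * Tf) → ℝ | fenchelConj f₂ θ < ⊤}) with hSdef
  have hSbdd : BddAbove ((fun θ : Fin (p * Tf) → ℝ => ‖θ‖) ''
      {θ : Fin (p * Tf) → ℝ | fenchelConj f₂ θ < ⊤}) := by
    obtain ⟨C, hC⟩ := isBounded_iff_forall_norm_le.mp hΘ₂bdd
    exact ⟨C, by rintro r ⟨θ, hθ, rfl⟩; exact hC θ hθ⟩
  set L := max (S * D₁) (lamini * D₂) with hLdef
  have hL0 : 0 ≤ L := le_trans (mul_nonneg hlamini hD₂0) (le_max_right _ _)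
  set W : ((Fin (p * Tini) ⊕ Fin (p * Tf)) → Fin (dg + 1) → ℝ) → ℝ :=
    fun ξ => ∑ j, N (ξ j - ξhat j) with hWdef
  have hW0 : ∀ ξ, 0 ≤ W ξ := fun ξ => Finset.sum_nonneg fun j _ => hN0 _
  have hWcont : Continuous W := by
    apply continuous_finset_sum
    intro j _
    exact hNcont.comp ((continuous_apply j).sub continuous_const)
  have hWlint : ∫⁻ ξ, ENNReal.ofReal (W ξ) ∂Q ≤ ENNReal.ofReal ε := by
    refine le_trans ?_ hball
    exact lintegral_le_wassersteinDist_dirac _ Q ξhat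
      (ENNReal.measurable_ofReal.comp hWcont.measurable)
  have hWint : Integrable W Q := by
    refine ⟨hWcont.aestronglyMeasurable, ?_⟩
    rw [hasFiniteIntegral_iff_norm]
    have heq : ∫⁻ ξ, ENNReal.ofReal ‖W ξ‖ ∂Q = ∫⁻ ξ, ENNReal.ofReal (W ξ) ∂Q :=
      lintegral_congr fun ξ => by rw [Real.norm_of_nonneg (hW0 ξ)]
    rw [heq]
    exact lt_of_le_of_lt hWlint ENNReal.ofReal_lt_top
  have hWle : ∫ ξ, W ξ ∂Q ≤ ε := by
    rw [integral_eq_lintegral_of_nonneg_ae (Filter.Eventually.of_forall hW0)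
      hWcont.aestronglyMeasurable]
    exact ENNReal.toReal_le_of_le_ofReal hε hWlint
  have key : ∀ ξ : (Fin (p * Tini) ⊕ Fin (p * Tf)) → Fin (dg + 1) → ℝ, (∀ j, ξ j ∈ Ξ j) →
      f₁ (Uf.mulVec g) + f₂ (fun k => ∑ i, ξ (Sum.inr k) i * hv i)
        + lamini * ∑ j : Fin (p * Tini), |∑ i, ξ (Sum.inl j) i * hv i|
      ≤ (f₁ (Uf.mulVec g) + f₂ (fun k => ∑ i, ξhat (Sum.inr k) i * hv i)
        + lamini * ∑ j : Fin (p * Tini), |∑ i, ξhat (Sum.inl j) i * hv i|) + L * W ξ := by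
    intro ξ hξ
    obtain ⟨θ, hθmem, hθsub⟩ := exists_subgradient f₂ hf₂conv hf₂cont
      (fun k => ∑ i, ξ (Sum.inr k) i * hv i)
    have hθS : ‖θ‖ ≤ S := le_csSup hSbdd ⟨θ, hθmem, rfl⟩
    have hS0 : 0 ≤ S := le_trans (norm_nonneg θ) hθS
    have hdiff : ∀ k : Fin (p * Tf),
        (∑ i, ξ (Sum.inr k) i * hv i) - (∑ i, ξhat (Sum.inr k) i * hv i)
          = ∑ i, (ξ (Sum.inr k) - ξhat (Sum.inr k)) i * hw i := by
      intro k
      have hlast : (ξ (Sum.inr k) - ξhat (Sum.inr k)) (Fin.last dg) = 0 := by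
        have h1 := hΞfut k _ (hξ (Sum.inr k))
        have h2 := hΞfut k _ (hξhat (Sum.inr k))
        simp [Pi.sub_apply, h1, h2]
      calc (∑ i, ξ (Sum.inr k) i * hv i) - (∑ i, ξhat (Sum.inr k) i * hv i)
          = ∑ i, (ξ (Sum.inr k) - ξhat (Sum.inr k)) i * hv i := by
            rw [← Finset.sum_sub_distrib]
            refine Finset.sum_congr rfl fun i _ => ?_
            simp [Pi.sub_apply]; ring
        _ = ∑ i, (ξ (Sum.inr k) - ξhat (Sum.inr k)) i * hw i :=
            snoc_sum_eq g (-1) 0 _ hlast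
    have hsub : f₂ (fun k => ∑ i, ξ (Sum.inr k) i * hv i)
        - f₂ (fun k => ∑ i, ξhat (Sum.inr k) i * hv i)
        ≤ ∑ k, θ k * ((∑ i, ξ (Sum.inr k) i * hv i) - (∑ i, ξhat (Sum.inr k) i * hv i)) := by
      have h1 := hθsub (fun k => ∑ i, ξhat (Sum.inr k) i * hv i)
      beta_reduce at h1
      have h2 : ∑ k, θ k * ((∑ i, ξ (Sum.inr k) i * hv i) - (∑ i, ξhat (Sum.inr k) i * hv i))
          = (∑ k, θ k * ∑ i, ξ (Sum.inr k) i * hv i)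
            - ∑ k, θ k * ∑ i, ξhat (Sum.inr k) i * hv i := by
        rw [← Finset.sum_sub_distrib]
        exact Finset.sum_congr rfl fun k _ => by ring
      rw [h2]
      linarith
    have hsum2 : ∑ k, θ k * ((∑ i, ξ (Sum.inr k) i * hv i) - (∑ i, ξhat (Sum.inr k) i * hv i))
        ≤ (S * D₁) * ∑ k, N (ξ (Sum.inr k) - ξhat (Sum.inr k)) := by
      calc ∑ k, θ k * ((∑ i, ξ (Sum.inr k) i * hv i) - (∑ i, ξhat (Sum.inr k) i * hv i))
          ≤ ∑ k, S * (N (ξ (Sum.inr k) - ξhat (Sum.inr k)) * D₁) := by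
            refine Finset.sum_le_sum fun k _ => ?_
            rw [hdiff k]
            have habs := abs_pairing_le_N_mul_dual hNeq hNsmul hN0 hlow
              (ξ (Sum.inr k) - ξhat (Sum.inr k)) hw
            have hθk : |θ k| ≤ ‖θ‖ := by
              simpa [Real.norm_eq_abs] using norm_le_pi_norm θ k
            calc θ k * ∑ i, (ξ (Sum.inr k) - ξhat (Sum.inr k)) i * hw i
                ≤ |θ k * ∑ i, (ξ (Sum.inr k) - ξhat (Sum.inr k)) i * hw i| := le_abs_self _
              _ = |θ k| * |∑ i, (ξ (Sum.inr k) - ξhat (Sum.inr k)) i * hw i| := abs_mul _ _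
              _ ≤ S * (N (ξ (Sum.inr k) - ξhat (Sum.inr k)) * D₁) :=
                  mul_le_mul (hθk.trans hθS) habs (abs_nonneg _) hS0
        _ = (S * D₁) * ∑ k, N (ξ (Sum.inr k) - ξhat (Sum.inr k)) := by
            rw [Finset.mul_sum]
            exact Finset.sum_congr rfl fun k _ => by ring
    have hlam : ∀ j : Fin (p * Tini), |∑ i, ξ (Sum.inl j) i * hv i|
        ≤ |∑ i, ξhat (Sum.inl j) i * hv i|
          + N (ξ (Sum.inl j) - ξhat (Sum.inl j)) * D₂ := by
      intro j
      have hsplit : ∑ i, ξ (Sum.inl j) i * hv i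
          = (∑ i, ξhat (Sum.inl j) i * hv i)
            + ∑ i, (ξ (Sum.inl j) - ξhat (Sum.inl j)) i * hv i := by
        rw [← Finset.sum_add_distrib]
        refine Finset.sum_congr rfl fun i _ => ?_
        simp [Pi.sub_apply]; ring
      rw [hsplit]
      refine le_trans (abs_add_le _ _) ?_
      have habs := abs_pairing_le_N_mul_dual hNeq hNsmul hN0 hlow
        (ξ (Sum.inl j) - ξhat (Sum.inl j)) hv
      linarith
    have hlamsum : ∑ j : Fin (p * Tini), |∑ i, ξ (Sum.inl j) i * hv i|
        ≤ (∑ j : Fin (p * Tini), |∑ i, ξhat (Sum.inl j) i * hv i|)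
          + D₂ * ∑ j : Fin (p * Tini), N (ξ (Sum.inl j) - ξhat (Sum.inl j)) := by
      calc ∑ j : Fin (p * Tini), |∑ i, ξ (Sum.inl j) i * hv i|
          ≤ ∑ j : Fin (p * Tini), (|∑ i, ξhat (Sum.inl j) i * hv i|
              + N (ξ (Sum.inl j) - ξhat (Sum.inl j)) * D₂) :=
            Finset.sum_le_sum fun j _ => hlam j
        _ = (∑ j : Fin (p * Tini), |∑ i, ξhat (Sum.inl j) i * hv i|)
              + D₂ * ∑ j : Fin (p * Tini), N (ξ (Sum.inl j) - ξhat (Sum.inl j)) := by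
            rw [Finset.sum_add_distrib, Finset.mul_sum]
            congr 1
            exact Finset.sum_congr rfl fun j _ => by ring
    have hWsplit : W ξ = (∑ j : Fin (p * Tini), N (ξ (Sum.inl j) - ξhat (Sum.inl j)))
        + ∑ k : Fin (p * Tf), N (ξ (Sum.inr k) - ξhat (Sum.inr k)) := by
      rw [hWdef]
      exact Fintype.sum_sum_type _
    have hfut0 : 0 ≤ ∑ k : Fin (p * Tf), N (ξ (Sum.inr k) - ξhat (Sum.inr k)) :=
      Finset.sum_nonneg fun k _ => hN0 _
    have hpast0 : 0 ≤ ∑ j : Fin (p * Tini), N (ξ (Sum.inl j) - ξhat (Sum.inl j)) :=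
      Finset.sum_nonneg fun j _ => hN0 _
    have e1 : (S * D₁) * ∑ k : Fin (p * Tf), N (ξ (Sum.inr k) - ξhat (Sum.inr k))
        ≤ L * ∑ k : Fin (p * Tf), N (ξ (Sum.inr k) - ξhat (Sum.inr k)) :=
      mul_le_mul_of_nonneg_right (le_max_left _ _) hfut0
    have e2 : (lamini * D₂) * ∑ j : Fin (p * Tini), N (ξ (Sum.inl j) - ξhat (Sum.inl j))
        ≤ L * ∑ j : Fin (p * Tini), N (ξ (Sum.inl j) - ξhat (Sum.inl j)) :=
      mul_le_mul_of_nonneg_right (le_max_right _ _) hpast0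
    have hlam' : lamini * ∑ j : Fin (p * Tini), |∑ i, ξ (Sum.inl j) i * hv i|
        ≤ lamini * (∑ j : Fin (p * Tini), |∑ i, ξhat (Sum.inl j) i * hv i|)
          + (lamini * D₂) * ∑ j : Fin (p * Tini), N (ξ (Sum.inl j) - ξhat (Sum.inl j)) := by
      calc lamini * ∑ j : Fin (p * Tini), |∑ i, ξ (Sum.inl j) i * hv i|
          ≤ lamini * ((∑ j : Fin (p * Tini), |∑ i, ξhat (Sum.inl j) i * hv i|)
              + D₂ * ∑ j : Fin (p * Tini), N (ξ (Sum.inl j) - ξhat (Sum.inl j))) :=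
            mul_le_mul_of_nonneg_left hlamsum hlamini
        _ = lamini * (∑ j : Fin (p * Tini), |∑ i, ξhat (Sum.inl j) i * hv i|)
              + (lamini * D₂) * ∑ j : Fin (p * Tini), N (ξ (Sum.inl j) - ξhat (Sum.inl j)) := by
            ring
    have e3 : L * W ξ
        = L * (∑ j : Fin (p * Tini), N (ξ (Sum.inl j) - ξhat (Sum.inl j)))
          + L * ∑ k : Fin (p * Tf), N (ξ (Sum.inr k) - ξhat (Sum.inr k)) := by
      rw [hWsplit]; ring
    linarith [hsub, hsum2, hlam', e1, e2, e3]
  have hpt : (fun ξ : (Fin (p * Tini) ⊕ Fin (p * Tf)) → Fin (dg + 1) → ℝ =>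
      f₁ (Uf.mulVec g) + f₂ (fun k => ∑ i, ξ (Sum.inr k) i * hv i)
        + lamini * ∑ j : Fin (p * Tini), |∑ i, ξ (Sum.inl j) i * hv i|)
      ≤ᵐ[Q] fun ξ =>
      (f₁ (Uf.mulVec g) + f₂ (fun k => ∑ i, ξhat (Sum.inr k) i * hv i)
        + lamini * ∑ j : Fin (p * Tini), |∑ i, ξhat (Sum.inl j) i * hv i|) + L * W ξ :=
    hsupp.mono fun ξ hξ => key ξ hξ
  calc (∫ ξ, (f₁ (Uf.mulVec g)
        + f₂ (fun k => ∑ i, ξ (Sum.inr k) i * hv i)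
        + lamini * ∑ j : Fin (p * Tini), |∑ i, ξ (Sum.inl j) i * hv i|) ∂Q)
      ≤ ∫ ξ, ((f₁ (Uf.mulVec g) + f₂ (fun k => ∑ i, ξhat (Sum.inr k) i * hv i)
          + lamini * ∑ j : Fin (p * Tini), |∑ i, ξhat (Sum.inl j) i * hv i|) + L * W ξ) ∂Q :=
        integral_mono_ae hint ((integrable_const _).add (hWint.const_mul L)) hpt
    _ = (f₁ (Uf.mulVec g) + f₂ (fun k => ∑ i, ξhat (Sum.inr k) i * hv i)
          + lamini * ∑ j : Fin (p * Tini), |∑ i, ξhat (Sum.inl j) i * hv i|)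
          + L * ∫ ξ, W ξ ∂Q := by
        rw [integral_add (integrable_const _) (hWint.const_mul L), integral_const,
          integral_const_mul]
        simp [measure_univ]
    _ ≤ (f₁ (Uf.mulVec g) + f₂ (fun k => ∑ i, ξhat (Sum.inr k) i * hv i)
          + lamini * ∑ j : Fin (p * Tini), |∑ i, ξhat (Sum.inl j) i * hv i|) + L * ε := by
        have := mul_le_mul_of_nonneg_left hWle hL0
        linarith
    _ = (f₁ (Uf.mulVec g) + f₂ (fun k => ∑ i, ξhat (Sum.inr k) i * hv i)
          + lamini * ∑ j : Fin (p * Tini), |∑ i, ξhat (Sum.inl j) i * hv i|) + ε * L := by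
        ring
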